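/- Let k, t, n be integers with k odd, t >= 0 and 2t+1 < k <= n. Then there is a geodesic in H_n that jumps at least k times in maj_t(k); in particular inst(maj_t(k)) >= k, so maj_t(k) has instability strictly larger than 2t+1. -/

import Mathlib

open Finset

/-- The number of entries of a point of the hypercube equal to `1` (`true`). -/
def onesCount {n : ℕ} (x : Fin n → Bool) : ℕ :=
  (univ.filter fun i => x i = true).card

/-- The number of entries of a point of the hypercube equal to `0` (`false`). -/
def zerosCount {n : ℕ} (x : Fin n → Bool) : ℕ :=
  (univ.filter fun i => x i = false).card

/-- `P` is a geodesic in the `n`-hypercube: consecutive points differ in exactly one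
entry, and each of the `n` entries changes at exactly one step. -/
def IsGeodesic {n : ℕ} (P : Fin (n+1) → Fin n → Bool) : Prop :=
  ∃ σ : Equiv.Perm (Fin n), ∀ j : Fin n, ∀ ℓ : Fin n,
    P j.succ ℓ = if σ ℓ = j then !(P j.castSucc ℓ) else P j.castSucc ℓ

/-- The number of jumps of the geodesic `P` in the colouring `f`. -/
def jumps {n : ℕ} (f : (Fin n → Bool) → Bool) (P : Fin (n+1) → Fin n → Bool) : ℕ :=
  (univ.filter fun j : Fin n => f (P j.succ) ≠ f (P j.castSucc)).card

/-- `inst f` is the maximum of `jumps f P` over all geodesics `P`. -/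
noncomputable def inst {n : ℕ} (f : (Fin n → Bool) → Bool) : ℕ :=
  sSup {m | ∃ P : Fin (n+1) → Fin n → Bool, IsGeodesic P ∧ m = jumps f P}

/-- The number of `1`s among the first `k` entries of `x`. -/
def firstOnes {n : ℕ} (k : ℕ) (x : Fin n → Bool) : ℕ :=
  (univ.filter fun i : Fin n => i.val < k ∧ x i = true).card

/-- The majority colouring `maj_t(k)` (for odd `k`): canonically `0` on `B_t(0^n)`,
`1` on `B_t(1^n)`, and elsewhere the majority colour of the first `k` entries. -/
def maj {n : ℕ} (t k : ℕ) (x : Fin n → Bool) : Bool :=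
  if onesCount x ≤ t then false
  else if zerosCount x ≤ t then true
  else decide (k < 2 * firstOnes k x)

lemma count_odd (N : ℕ) : ((range N).filter fun i => i % 2 = 1).card = N / 2 := by
  induction N with
  | zero => simp
  | succ N ih =>
    rw [Finset.range_add_one, Finset.filter_insert]
    by_cases h : N % 2 = 1
    · rw [if_pos h, Finset.card_insert_of_notMem (by simp), ih]; omega
    · rw [if_neg h, ih]; omega

lemma count_even (N : ℕ) : ((range N).filter fun i => i % 2 = 0).card = (N + 1) / 2 := by
  induction N with
  | zero => simp
  | succ N ih =>
    rw [Finset.range_add_one, Finset.filter_insert]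
    by_cases h : N % 2 = 0
    · rw [if_pos h, Finset.card_insert_of_notMem (by simp), ih]; omega
    · rw [if_neg h, ih]; omega

lemma finCount (n : ℕ) (p : ℕ → Prop) [DecidablePred p] :
    (univ.filter fun i : Fin n => p i.val).card = ((range n).filter p).card := by
  rw [Finset.card_filter, Finset.card_filter]
  exact Fin.sum_univ_eq_sum_range (fun i => if p i then 1 else 0) n

lemma ones_eq (n k j : ℕ) (hk : k ≤ n) (hj : j ≤ k) :
    ((range n).filter fun i => xor (decide (i < j)) (decide (i % 2 = 1 ∧ i < k)) = true).card
      = k / 2 + j % 2 := by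
  have hset : ((range n).filter fun i => xor (decide (i < j)) (decide (i % 2 = 1 ∧ i < k)) = true)
      = ((range j).filter fun i => i % 2 = 0) ∪
        (((range k).filter fun i => i % 2 = 1) \ ((range j).filter fun i => i % 2 = 1)) := by
    ext i
    simp only [mem_filter, mem_range, mem_union, mem_sdiff, Bool.xor_iff_ne, ne_eq,
      decide_eq_decide, decide_eq_true_eq, not_and, not_lt]
    omega
  rw [hset, Finset.card_union_of_disjoint, Finset.card_sdiff_of_subset, count_odd, count_odd, count_even]
  · omega
  · intro i hi
    simp only [mem_filter, mem_range] at *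
    exact ⟨hi.1.trans_le hj, hi.2⟩
  · simp only [Finset.disjoint_left, mem_filter, mem_range, mem_sdiff, not_and, not_not]
    intro a ha hb
    omega

def Pgeo (n k : ℕ) : Fin (n+1) → Fin n → Bool :=
  fun j i => xor (decide (i.val < j.val)) (decide (i.val % 2 = 1 ∧ i.val < k))

lemma Pgeo_geodesic (n k : ℕ) : IsGeodesic (Pgeo n k) := by
  refine ⟨Equiv.refl _, fun j ℓ => ?_⟩
  simp only [Pgeo, Equiv.refl_apply, Fin.val_succ, Fin.coe_castSucc]
  by_cases h : ℓ = j
  · subst h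
    simp
  · simp only [h, ↓reduceIte]
    have hv : ℓ.val ≠ j.val := fun hh => h (Fin.val_injective hh)
    have : decide (ℓ.val < j.val + 1) = decide (ℓ.val < j.val) := by
      simp only [decide_eq_decide]; omega
    rw [this]

lemma zeros_eq (n : ℕ) (x : Fin n → Bool) : zerosCount x = n - onesCount x := by
  have h := Finset.card_filter_add_card_filter_not
    (s := (univ : Finset (Fin n))) (p := fun i => x i = true)
  simp only [Bool.not_eq_true, Finset.card_univ, Fintype.card_fin] at h
  unfold zerosCount onesCount
  omega

lemma maj_Pgeo (n t k : ℕ) (hodd : Odd k) (h2t : 2 * t + 1 < k) (hkn : k ≤ n)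
    (j : Fin (n+1)) (hj : j.val ≤ k) :
    maj t k (Pgeo n k j) = decide (j.val % 2 = 1) := by
  obtain ⟨m, hm⟩ := hodd
  have hones : onesCount (Pgeo n k j) = k / 2 + j.val % 2 := by
    unfold onesCount Pgeo
    rw [finCount n (fun i => xor (decide (i < j.val)) (decide (i % 2 = 1 ∧ i < k)) = true)]
    exact ones_eq n k j.val hkn hj
  have hfirst : firstOnes k (Pgeo n k j) = onesCount (Pgeo n k j) := by
    unfold firstOnes onesCount
    congr 1
    apply Finset.filter_congr
    intro i _
    constructor
    · exact fun h => h.2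
    · intro h
      refine ⟨?_, h⟩
      by_contra hik
      simp only [Pgeo] at h
      have h1 : decide (i.val % 2 = 1 ∧ i.val < k) = false := by
        simp only [decide_eq_false_iff_not]; omega
      have h2 : decide (i.val < j.val) = false := by
        simp only [decide_eq_false_iff_not]; omega
      rw [h1, h2] at h
      simp at h
  have hzeros : zerosCount (Pgeo n k j) = n - (k / 2 + j.val % 2) := by
    rw [zeros_eq, hones]
  unfold maj
  rw [if_neg (by omega), if_neg (by omega), hfirst, hones]
  simp only [decide_eq_decide]
  omega


/-- For `k` odd with `2t+1 < k ≤ n`, there is a geodesic jumping at least `k` times in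
`maj_t(k)`; in particular `inst (maj_t(k)) ≥ k > 2t+1`. -/
theorem maj_large_k (n t k : ℕ) (hodd : Odd k) (h2t : 2 * t + 1 < k) (hkn : k ≤ n) :
    (∃ P : Fin (n+1) → Fin n → Bool, IsGeodesic P ∧ k ≤ jumps (maj t k) P) ∧
    k ≤ inst (maj (n := n) t k) ∧ 2 * t + 1 < inst (maj (n := n) t k) := by
  have hjumps : k ≤ jumps (maj t k) (Pgeo n k) := by
    unfold jumps
    have hsub : (univ.filter fun j : Fin n => j.val < k) ⊆
        univ.filter (fun j : Fin n =>
          maj t k (Pgeo n k j.succ) ≠ maj t k (Pgeo n k j.castSucc)) := by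
      intro j hj
      simp only [mem_filter, mem_univ, true_and] at hj ⊢
      rw [maj_Pgeo n t k hodd h2t hkn j.succ (by simp [Fin.val_succ]; omega),
        maj_Pgeo n t k hodd h2t hkn j.castSucc (by simp [Fin.coe_castSucc]; omega)]
      simp only [Fin.val_succ, Fin.coe_castSucc, ne_eq, decide_eq_decide]
      omega
    have hcard : (univ.filter fun j : Fin n => j.val < k).card = k := by
      rw [finCount n (fun i => i < k)]
      have : (range n).filter (fun i => i < k) = range k := by
        ext i
        simp only [mem_filter, mem_range]
        omega
      rw [this, card_range]
    calc k = (univ.filter fun j : Fin n => j.val < k).card := hcard.symm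
      _ ≤ _ := Finset.card_le_card hsub
  have hbdd : BddAbove {m | ∃ P : Fin (n+1) → Fin n → Bool,
      IsGeodesic P ∧ m = jumps (maj (n := n) t k) P} := by
    refine ⟨n, fun m hm => ?_⟩
    obtain ⟨P, _, rfl⟩ := hm
    calc jumps (maj t k) P ≤ (univ : Finset (Fin n)).card := Finset.card_filter_le _ _
      _ = n := by simp
  have hinst : k ≤ inst (maj (n := n) t k) :=
    le_trans hjumps (le_csSup hbdd ⟨Pgeo n k, Pgeo_geodesic n k, rfl⟩)
  exact ⟨⟨Pgeo n k, Pgeo_geodesic n k, hjumps⟩, hinst, lt_of_lt_of_le h2t hinst⟩
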